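/- Let r and n be positive integers and let ε, ε' ∈ {0,1,…,r−1}^n satisfy supp(ε) = supp(ε'). Then for every integer k ≥ 0, the following identity holds in ℤ[q,u]: u^{col(ε')} · ∑_{v ∈ L_ε(k)} ∏_{i=1}^n m'(v_i, k) = u^{col(ε)} · ∑_{v ∈ L_{ε'}(k)} ∏_{i=1}^n m'(v_i, k). -/

import Mathlib

open Finset

/-- 1-based value of `π` at position `i ∈ {1,…,n}`, with the convention `π(0) = 0`. -/
def wval {n : ℕ} (π : Equiv.Perm (Fin n)) (i : ℕ) : ℕ :=
  if h : 1 ≤ i ∧ i ≤ n then (π ⟨i - 1, by omega⟩ : ℕ) + 1 else 0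

/-- Color at position `i` (1-based), with the convention `ε_0 = 0`. -/
def wcolor {n : ℕ} (ε : Fin n → ℕ) (i : ℕ) : ℕ :=
  if h : 1 ≤ i ∧ i ≤ n then ε ⟨i - 1, by omega⟩ else 0

/-- The Biagioli–Zeng order on colored letters: `(j,c) > (k,d)`. -/
def bzGT (a b : ℕ × ℕ) : Prop :=
  (a.2 = 0 ∧ b.2 = 0 ∧ b.1 < a.1) ∨ (0 < a.2 ∧ 0 < b.2 ∧ a.1 < b.1) ∨ (a.2 = 0 ∧ 0 < b.2)

instance (a b : ℕ × ℕ) : Decidable (bzGT a b) := by unfold bzGT; exact inferInstance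

/-- The descent set `Des(ε,π) ⊆ {0,…,n-1}` of a colored permutation. -/
def DesBZ {n : ℕ} (ε : Fin n → ℕ) (π : Equiv.Perm (Fin n)) : Finset ℕ :=
  (Finset.range n).filter fun i =>
    bzGT (wval π i, wcolor ε i) (wval π (i + 1), wcolor ε (i + 1))

def desBZ {n : ℕ} (ε : Fin n → ℕ) (π : Equiv.Perm (Fin n)) : ℕ := (DesBZ ε π).card

def majBZ {n : ℕ} (ε : Fin n → ℕ) (π : Equiv.Perm (Fin n)) : ℕ := ∑ i ∈ DesBZ ε π, i

/-- The color weight `col(ε)`. -/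
def colwt {n : ℕ} (ε : Fin n → ℕ) : ℕ := ∑ i, ε i

/-- Ordinary descent set `{i ∈ {1,…,n-1} : σ(i) > σ(i+1)}` (1-based). -/
def ordDes {n : ℕ} (σ : Equiv.Perm (Fin n)) : Finset ℕ :=
  (Finset.range n).filter fun i => 1 ≤ i ∧ wval σ (i + 1) < wval σ i

noncomputable def qP : MvPolynomial (Fin 2) ℤ := MvPolynomial.X 0
noncomputable def uP : MvPolynomial (Fin 2) ℤ := MvPolynomial.X 1
noncomputable def qNat (m : ℕ) : MvPolynomial (Fin 2) ℤ := ∑ i ∈ Finset.range m, qP ^ i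
noncomputable def uNat (m : ℕ) : MvPolynomial (Fin 2) ℤ := ∑ i ∈ Finset.range m, uP ^ i

/-- The monomial `m'(j,k)`. -/
noncomputable def mPrime (j k : ℕ) : MvPolynomial (Fin 2) ℤ :=
  if j ≤ k then qP ^ j else qP ^ ((j - 1) % k) * uP ^ ((j - 1) / k)

/-- Lattice points of `cone(F_ε)` at height `k`. -/
def Lset {n : ℕ} (ε : Fin n → ℕ) (k : ℕ) : Finset (Fin n → ℕ) :=
  Fintype.piFinset fun i =>
    if 0 < ε i then Finset.Ioc (k * ε i) (k * (ε i + 1)) else Finset.Icc 0 k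

lemma mPrime_sum_pos (k e : ℕ) (he : 0 < e) :
    ∑ j ∈ Finset.Ioc (k * e) (k * (e + 1)), mPrime j k = uP ^ e * qNat k := by
  rcases Nat.eq_zero_or_pos k with hk | hk
  · simp [hk, qNat]
  have : Finset.Ioc (k * e) (k * (e + 1)) = Finset.Ico (k * e + 1) (k * e + k + 1) := by
    ext x; simp [Finset.mem_Ioc, Finset.mem_Ico, Nat.mul_add]
  rw [this, Finset.sum_Ico_eq_sum_range]
  have hrange : k * e + k + 1 - (k * e + 1) = k := by omega
  rw [hrange, qNat, Finset.mul_sum]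
  apply Finset.sum_congr rfl
  intro t ht
  simp only [Finset.mem_range] at ht
  have hgt : ¬ (k * e + 1 + t ≤ k) := by nlinarith
  have h1 : k * e + 1 + t - 1 = k * e + t := by omega
  rw [mPrime, if_neg hgt, h1, Nat.mul_add_mod, Nat.mod_eq_of_lt ht,
    Nat.mul_add_div hk, Nat.div_eq_of_lt ht, Nat.add_zero, mul_comm]

lemma mPrime_sum_zero (k : ℕ) :
    ∑ j ∈ Finset.Icc 0 k, mPrime j k = qNat (k + 1) := by
  rw [qNat, ← Nat.Ico_zero_eq_range, ← Finset.Ico_add_one_right_eq_Icc]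
  apply Finset.sum_congr rfl
  intro j hj
  simp only [Finset.mem_Ico] at hj
  rw [mPrime, if_pos (by omega)]

lemma Lset_sum {n : ℕ} (ε : Fin n → ℕ) (k : ℕ) :
    ∑ v ∈ Lset ε k, ∏ i, mPrime (v i) k =
      ∏ i, (if 0 < ε i then uP ^ (ε i) * qNat k else qNat (k + 1)) := by
  rw [Lset, ← Finset.prod_univ_sum
    (fun i => if 0 < ε i then Finset.Ioc (k * ε i) (k * (ε i + 1)) else Finset.Icc 0 k)
    (fun _ j => mPrime j k)]
  apply Finset.prod_congr rfl
  intro i _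
  by_cases h : 0 < ε i
  · rw [if_pos h, if_pos h, mPrime_sum_pos k _ h]
  · rw [if_neg h, if_neg h, mPrime_sum_zero]

theorem same_support_lattice_sum (r n : ℕ) (hr : 0 < r) (hn : 0 < n)
    (ε ε' : Fin n → ℕ) (hε : ∀ i, ε i < r) (hε' : ∀ i, ε' i < r)
    (hsupp : ∀ i, 0 < ε i ↔ 0 < ε' i) (k : ℕ) :
    uP ^ colwt ε' * ∑ v ∈ Lset ε k, ∏ i, mPrime (v i) k =
      uP ^ colwt ε * ∑ v ∈ Lset ε' k, ∏ i, mPrime (v i) k := by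
  rw [Lset_sum, Lset_sum, colwt, colwt, ← Finset.prod_pow_eq_pow_sum,
    ← Finset.prod_pow_eq_pow_sum, ← Finset.prod_mul_distrib, ← Finset.prod_mul_distrib]
  apply Finset.prod_congr rfl
  intro i _
  by_cases h : 0 < ε i
  · have h' : 0 < ε' i := (hsupp i).1 h
    rw [if_pos h, if_pos h', ← mul_assoc, ← mul_assoc, ← pow_add, ← pow_add,
      Nat.add_comm]
  · have h' : ¬ 0 < ε' i := fun hh => h ((hsupp i).2 hh)
    rw [if_neg h, if_neg h']
    have : ε i = 0 := by omega
    have : ε' i = 0 := by omega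
    simp_all
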